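/- arXiv:2503.08736 — 2 statements merged into one kernel-verified Lean document; each statement's English description precedes it below -/
import Mathlib

section
/- Let \widetilde{C} \subseteq \mathbb{F}_2^{n+1} be a self-orthogonal linear code all of whose codewords have even weight, and let S \subseteq \mathbb{F}_2^n be the image of \widetilde{C} under puncturing the last coordinate. Then S is a q-isotropic subspace of \mathbb{F}_2^n. -/
noncomputable def q {n : ℕ} (x y : Fin n → ZMod 2) : ZMod 2 :=
  (∑ i, x i * y i) + (hammingNorm x : ZMod 2) * (hammingNorm y : ZMod 2)

noncomputable def extend {n : ℕ} (x : Fin n → ZMod 2) : Fin (n + 1) → ZMod 2 :=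
  Fin.snoc x (hammingNorm x : ZMod 2)

lemma norm_cast_eq_sum {m : ℕ} (x : Fin m → ZMod 2) :
    (hammingNorm x : ZMod 2) = ∑ i, x i := by
  unfold hammingNorm
  rw [Finset.card_filter, Nat.cast_sum]
  refine Finset.sum_congr rfl fun i _ => ?_
  by_cases h : x i ≠ 0
  · simp [h]
    have : ∀ a : ZMod 2, a ≠ 0 → a = 1 := by decide
    exact (this _ h).symm
  · simp at h; simp [h]

theorem punctured_code_isotropic {n : ℕ}
    (Ct : Submodule (ZMod 2) (Fin (n + 1) → ZMod 2))
    (heven : ∀ c ∈ Ct, Even (hammingNorm c))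
    (horth : ∀ c ∈ Ct, ∀ c' ∈ Ct, (∑ i, c i * c' i) = 0)
    (S : Set (Fin n → ZMod 2))
    (hS : S = Fin.init '' (Ct : Set (Fin (n + 1) → ZMod 2))) :
    (∃ S' : Submodule (ZMod 2) (Fin n → ZMod 2), (S' : Set (Fin n → ZMod 2)) = S) ∧
      ∀ x ∈ S, ∀ y ∈ S, q x y = 0 := by
  have keylast : ∀ c ∈ Ct, (hammingNorm (Fin.init c) : ZMod 2) = c (Fin.last n) := by
    intro c hc
    have h0 : (hammingNorm c : ZMod 2) = 0 := by
      obtain ⟨k, hk⟩ := heven c hc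
      rw [hk, Nat.cast_add]
      exact (by decide : ∀ a : ZMod 2, a + a = 0) _
    have := norm_cast_eq_sum c
    rw [Fin.sum_univ_castSucc] at this
    rw [norm_cast_eq_sum]
    have hinit : ∀ i : Fin n, Fin.init c i = c i.castSucc := fun i => rfl
    simp only [hinit]
    have : (0 : ZMod 2) = (∑ i : Fin n, c i.castSucc) + c (Fin.last n) := by
      rw [← this, h0]
    have hsum : ∑ i : Fin n, c i.castSucc = - c (Fin.last n) := by linear_combination -this
    rw [hsum]; exact (by decide : ∀ a : ZMod 2, -a = a) _
  constructor
  · refine ⟨Submodule.map (LinearMap.funLeft (ZMod 2) (ZMod 2) Fin.castSucc) Ct, ?_⟩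
    rw [hS]
    ext x
    simp [LinearMap.funLeft, Set.mem_image]
    constructor
    · rintro ⟨c, hc, rfl⟩; exact ⟨c, hc, rfl⟩
    · rintro ⟨c, hc, rfl⟩; exact ⟨c, hc, rfl⟩
  · intro x hx y hy
    rw [hS] at hx hy
    obtain ⟨c, hc, rfl⟩ := hx
    obtain ⟨c', hc', rfl⟩ := hy
    have horth' := horth c hc c' hc'
    rw [Fin.sum_univ_castSucc] at horth'
    unfold q
    rw [keylast c hc, keylast c' hc']
    have hinit : ∀ i : Fin n, Fin.init c i * Fin.init c' i = c i.castSucc * c' i.castSucc :=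
      fun i => rfl
    simp only [hinit]
    exact horth'
end

section
/- The map S \mapsto \widetilde{C} = { (x, wt(x) mod 2) : x \in S } is a bijection between q-isotropic subspaces of \mathbb{F}_2^n and all-even self-orthogonal linear codes in \mathbb{F}_2^{n+1}, with inverse given by puncturing the last coordinate. -/
lemma zmod2_cases (a : ZMod 2) : a = 0 ∨ a = 1 := by revert a; decide

lemma cast_hammingNorm {m : ℕ} (x : Fin m → ZMod 2) :
    ((hammingNorm x : ℕ) : ZMod 2) = ∑ i, x i := by
  unfold hammingNorm
  rw [Finset.card_eq_sum_ones, Nat.cast_sum, Finset.sum_filter]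
  refine Finset.sum_congr rfl fun i _ => ?_
  rcases zmod2_cases (x i) with h | h <;> simp [h]

lemma even_iff_cast {m : ℕ} : Even m ↔ ((m : ZMod 2) = 0) := by
  rw [Nat.even_iff, ZMod.natCast_eq_zero_iff, Nat.dvd_iff_mod_eq_zero]

noncomputable def Emap (n : ℕ) : (Fin n → ZMod 2) →ₗ[ZMod 2] (Fin (n + 1) → ZMod 2) where
  toFun := extend
  map_add' x y := by
    funext i
    refine Fin.lastCases ?_ (fun j => ?_) i
    · simp only [extend, Fin.snoc_last, Pi.add_apply, cast_hammingNorm]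
      simp [Finset.sum_add_distrib]
    · simp [extend]
  map_smul' c x := by
    rcases zmod2_cases c with h | h <;> subst h
    · simp only [zero_smul, RingHom.id_apply]
      funext i
      refine Fin.lastCases ?_ (fun j => ?_) i <;> simp [extend]
    · simp

noncomputable def Imap (n : ℕ) : (Fin (n + 1) → ZMod 2) →ₗ[ZMod 2] (Fin n → ZMod 2) :=
  LinearMap.funLeft (ZMod 2) (ZMod 2) Fin.castSucc

lemma Imap_apply {n : ℕ} (c : Fin (n + 1) → ZMod 2) : Imap n c = Fin.init c := rfl

lemma sum_mul_snoc {m : ℕ} (x y : Fin m → ZMod 2) (a b : ZMod 2) :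
    ∑ i, (Fin.snoc x a : Fin (m + 1) → ZMod 2) i * (Fin.snoc y b : Fin (m + 1) → ZMod 2) i
      = (∑ i, x i * y i) + a * b := by
  rw [Fin.sum_univ_castSucc]; simp

lemma last_eq {n : ℕ} (c : Fin (n + 1) → ZMod 2) (h : Even (hammingNorm c)) :
    c (Fin.last n) = ((hammingNorm (Fin.init c) : ℕ) : ZMod 2) := by
  have h0 : ((hammingNorm c : ℕ) : ZMod 2) = 0 := even_iff_cast.mp h
  rw [cast_hammingNorm, Fin.sum_univ_castSucc] at h0
  rw [cast_hammingNorm]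
  have hg : (∑ i, Fin.init c i) = ∑ i : Fin n, c (Fin.castSucc i) := rfl
  rw [hg]
  rcases zmod2_cases (c (Fin.last n)) with h1 | h1 <;>
    rcases zmod2_cases (∑ i : Fin n, c (Fin.castSucc i)) with h2 | h2 <;>
    rw [h1, h2] at h0 ⊢ <;> first | rfl | simp at h0

lemma extend_init {n : ℕ} (c : Fin (n + 1) → ZMod 2) (h : Even (hammingNorm c)) :
    extend (Fin.init c) = c := by
  funext i
  refine Fin.lastCases ?_ (fun j => ?_) i
  · simp [extend, last_eq c h]
  · simp [extend, Fin.init]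

theorem isotropic_self_orthogonal_bijection (n : ℕ) :
    ∃ f : {S : Submodule (ZMod 2) (Fin n → ZMod 2) //
            ∀ x ∈ S, ∀ y ∈ S, q x y = 0} ≃
          {C : Submodule (ZMod 2) (Fin (n + 1) → ZMod 2) //
            (∀ c ∈ C, Even (hammingNorm c)) ∧
              ∀ c ∈ C, ∀ c' ∈ C, (∑ i, c i * c' i) = 0},
      (∀ S, ((f S).1 : Set (Fin (n + 1) → ZMod 2)) =
          extend '' ((S.1 : Set (Fin n → ZMod 2)))) ∧
      ∀ C, ((f.symm C).1 : Set (Fin n → ZMod 2)) =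
          Fin.init '' ((C.1 : Set (Fin (n + 1) → ZMod 2))) := by
  have hIE : (Imap n).comp (Emap n) = LinearMap.id := by
    ext x i
    simp [Imap, Emap, extend, Fin.init_snoc]
  refine ⟨{
    toFun := fun S => ⟨S.1.map (Emap n), by
      rintro c ⟨x, hx, rfl⟩
      rw [even_iff_cast]
      show ((hammingNorm (extend x) : ℕ) : ZMod 2) = 0
      rw [cast_hammingNorm]
      show (∑ i, (Fin.snoc x ((hammingNorm x : ℕ) : ZMod 2) : Fin (n+1) → ZMod 2) i) = 0
      rw [Fin.sum_univ_castSucc]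
      simp only [Fin.snoc_castSucc, Fin.snoc_last, cast_hammingNorm]
      rcases zmod2_cases (∑ i, x i) with h | h <;> rw [h] <;> decide, by
      rintro c ⟨x, hx, rfl⟩ c' ⟨y, hy, rfl⟩
      show (∑ i, extend x i * extend y i) = 0
      rw [extend, extend, sum_mul_snoc]
      exact S.2 x hx y hy⟩
    invFun := fun C => ⟨C.1.map (Imap n), by
      rintro x ⟨c, hc, rfl⟩ y ⟨c', hc', rfl⟩
      rw [Imap_apply, Imap_apply, q, cast_hammingNorm, cast_hammingNorm]
      have hl := last_eq c (C.2.1 c hc)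
      have hl' := last_eq c' (C.2.1 c' hc')
      rw [cast_hammingNorm] at hl hl'
      have h0 := C.2.2 c hc c' hc'
      rw [Fin.sum_univ_castSucc] at h0
      have h1 : (∑ i, Fin.init c i * Fin.init c' i)
          = ∑ i : Fin n, c (Fin.castSucc i) * c' (Fin.castSucc i) := rfl
      rw [h1, ← hl, ← hl']
      exact h0⟩
    left_inv := by
      rintro ⟨S, hS⟩
      apply Subtype.ext
      show Submodule.map (Imap n) (Submodule.map (Emap n) S) = S
      rw [← Submodule.map_comp, hIE, Submodule.map_id]
    right_inv := by
      rintro ⟨C, hC⟩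
      apply Subtype.ext
      show Submodule.map (Emap n) (Submodule.map (Imap n) C) = C
      ext c
      simp only [Submodule.mem_map]
      constructor
      · rintro ⟨x, ⟨c', hc', rfl⟩, rfl⟩
        show extend (Fin.init c') ∈ C
        rw [extend_init c' (hC.1 c' hc')]
        exact hc'
      · intro hc
        exact ⟨Fin.init c, ⟨c, hc, rfl⟩, extend_init c (hC.1 c hc)⟩ }, ?_, ?_⟩
  · intro S
    exact Submodule.map_coe (Emap n) S.1
  · intro C
    exact Submodule.map_coe (Imap n) C.1
end
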